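/- Let M be a 3×3 real symmetric matrix. Then c(M) = (1/2)((trace M)² − trace(M²)) equals the minimum over all orthonormal bases (ν₁, ν₂, ν₃) of ℝ³ of σ₂(ν₁ᵀMν₁, ν₂ᵀMν₂, ν₃ᵀMν₃), where σ₂(a,b,c) = ab + ac + bc. The minimum is attained at an orthonormal eigenbasis of M. -/

import Mathlib

open Matrix

lemma core (M : Matrix (Fin 3) (Fin 3) ℝ) (hM : M.IsSymm)
    (ν : Fin 3 → Fin 3 → ℝ)
    (hν : ∀ i j, ν i ⬝ᵥ ν j = if i = j then (1:ℝ) else 0) :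
    (1 / 2) * ((Matrix.trace M) ^ 2 - Matrix.trace (M * M)) ≤
      (ν 0 ⬝ᵥ M.mulVec (ν 0)) * (ν 1 ⬝ᵥ M.mulVec (ν 1)) +
      (ν 0 ⬝ᵥ M.mulVec (ν 0)) * (ν 2 ⬝ᵥ M.mulVec (ν 2)) +
      (ν 1 ⬝ᵥ M.mulVec (ν 1)) * (ν 2 ⬝ᵥ M.mulVec (ν 2)) := by
  set N : Matrix (Fin 3) (Fin 3) ℝ := Matrix.of ν with hN
  have hNNT : N * Nᵀ = 1 := by
    ext i j
    simpa [hN, Matrix.mul_apply, dotProduct, Matrix.one_apply] using hν i j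
  have hNTN : Nᵀ * N = 1 := mul_eq_one_comm.mp hNNT
  set A := N * M * Nᵀ with hA
  have hentry : ∀ i j, A i j = ν i ⬝ᵥ M.mulVec (ν j) := by
    intro i j
    simp [hA, hN, Matrix.mul_apply, Matrix.mulVec, dotProduct, Fin.sum_univ_three]
    ring
  have htr : Matrix.trace A = Matrix.trace M := by
    rw [hA, Matrix.trace_mul_comm, ← Matrix.mul_assoc, hNTN, Matrix.one_mul]
  have htr2 : Matrix.trace (A * A) = Matrix.trace (M * M) := by
    have h1 : A * A = N * (M * M) * Nᵀ := by
      rw [hA]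
      calc N * M * Nᵀ * (N * M * Nᵀ) = N * M * (Nᵀ * N) * (M * Nᵀ) := by
            simp only [Matrix.mul_assoc]
        _ = N * (M * M) * Nᵀ := by rw [hNTN]; simp [Matrix.mul_assoc]
    rw [h1, Matrix.trace_mul_comm, ← Matrix.mul_assoc, hNTN, Matrix.one_mul]
  have hAsymm : Aᵀ = A := by
    rw [hA, Matrix.transpose_mul, Matrix.transpose_mul, Matrix.transpose_transpose, hM,
      Matrix.mul_assoc]
  have h01 : A 1 0 = A 0 1 := congrFun (congrFun hAsymm 0) 1
  have h02 : A 2 0 = A 0 2 := congrFun (congrFun hAsymm 0) 2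
  have h12 : A 2 1 = A 1 2 := congrFun (congrFun hAsymm 1) 2
  rw [← hentry 0 0, ← hentry 1 1, ← hentry 2 2, ← htr, ← htr2]
  simp only [Matrix.trace, Matrix.diag, Matrix.mul_apply, Fin.sum_univ_three, h01, h02, h12]
  nlinarith [sq_nonneg (A 0 1), sq_nonneg (A 0 2), sq_nonneg (A 1 2)]

lemma core_eq (M : Matrix (Fin 3) (Fin 3) ℝ) (_hM : M.IsSymm)
    (ν : Fin 3 → Fin 3 → ℝ)
    (hν : ∀ i j, ν i ⬝ᵥ ν j = if i = j then (1:ℝ) else 0)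
    (heig : ∀ i, ∃ μ : ℝ, M.mulVec (ν i) = μ • ν i) :
    (1 / 2) * ((Matrix.trace M) ^ 2 - Matrix.trace (M * M)) =
      (ν 0 ⬝ᵥ M.mulVec (ν 0)) * (ν 1 ⬝ᵥ M.mulVec (ν 1)) +
      (ν 0 ⬝ᵥ M.mulVec (ν 0)) * (ν 2 ⬝ᵥ M.mulVec (ν 2)) +
      (ν 1 ⬝ᵥ M.mulVec (ν 1)) * (ν 2 ⬝ᵥ M.mulVec (ν 2)) := by
  have hoff : ∀ i j : Fin 3, i ≠ j → ν i ⬝ᵥ M.mulVec (ν j) = 0 := by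
    intro i j hij
    obtain ⟨μ, hμ⟩ := heig j
    rw [hμ, dotProduct_smul, hν i j, if_neg hij, smul_zero]
  set N : Matrix (Fin 3) (Fin 3) ℝ := Matrix.of ν with hN
  have hNNT : N * Nᵀ = 1 := by
    ext i j
    simpa [hN, Matrix.mul_apply, dotProduct, Matrix.one_apply] using hν i j
  have hNTN : Nᵀ * N = 1 := mul_eq_one_comm.mp hNNT
  set A := N * M * Nᵀ with hA
  have hentry : ∀ i j, A i j = ν i ⬝ᵥ M.mulVec (ν j) := by
    intro i j
    simp [hA, hN, Matrix.mul_apply, Matrix.mulVec, dotProduct, Fin.sum_univ_three]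
    ring
  have htr : Matrix.trace A = Matrix.trace M := by
    rw [hA, Matrix.trace_mul_comm, ← Matrix.mul_assoc, hNTN, Matrix.one_mul]
  have htr2 : Matrix.trace (A * A) = Matrix.trace (M * M) := by
    have h1 : A * A = N * (M * M) * Nᵀ := by
      rw [hA]
      calc N * M * Nᵀ * (N * M * Nᵀ) = N * M * (Nᵀ * N) * (M * Nᵀ) := by
            simp only [Matrix.mul_assoc]
        _ = N * (M * M) * Nᵀ := by rw [hNTN]; simp [Matrix.mul_assoc]
    rw [h1, Matrix.trace_mul_comm, ← Matrix.mul_assoc, hNTN, Matrix.one_mul]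
  have e01 : A 0 1 = 0 := by rw [hentry]; exact hoff 0 1 (by decide)
  have e02 : A 0 2 = 0 := by rw [hentry]; exact hoff 0 2 (by decide)
  have e12 : A 1 2 = 0 := by rw [hentry]; exact hoff 1 2 (by decide)
  have e10 : A 1 0 = 0 := by rw [hentry]; exact hoff 1 0 (by decide)
  have e20 : A 2 0 = 0 := by rw [hentry]; exact hoff 2 0 (by decide)
  have e21 : A 2 1 = 0 := by rw [hentry]; exact hoff 2 1 (by decide)
  rw [← hentry 0 0, ← hentry 1 1, ← hentry 2 2, ← htr, ← htr2]
  simp only [Matrix.trace, Matrix.diag, Matrix.mul_apply, Fin.sum_univ_three,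
    e01, e02, e12, e10, e20, e21]
  ring

theorem stmt_7 (M : Matrix (Fin 3) (Fin 3) ℝ) (hM : M.IsSymm) :
    IsLeast {x : ℝ | ∃ ν : Fin 3 → (Fin 3 → ℝ),
        (∀ i j, ν i ⬝ᵥ ν j = if i = j then (1 : ℝ) else 0) ∧
        x = (ν 0 ⬝ᵥ M.mulVec (ν 0)) * (ν 1 ⬝ᵥ M.mulVec (ν 1)) +
            (ν 0 ⬝ᵥ M.mulVec (ν 0)) * (ν 2 ⬝ᵥ M.mulVec (ν 2)) +
            (ν 1 ⬝ᵥ M.mulVec (ν 1)) * (ν 2 ⬝ᵥ M.mulVec (ν 2))}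
      ((1 / 2) * ((Matrix.trace M) ^ 2 - Matrix.trace (M * M))) ∧
    ∃ ν : Fin 3 → (Fin 3 → ℝ),
      (∀ i j, ν i ⬝ᵥ ν j = if i = j then (1 : ℝ) else 0) ∧
      (∀ i, ∃ μ : ℝ, M.mulVec (ν i) = μ • ν i) ∧
      (1 / 2) * ((Matrix.trace M) ^ 2 - Matrix.trace (M * M)) =
        (ν 0 ⬝ᵥ M.mulVec (ν 0)) * (ν 1 ⬝ᵥ M.mulVec (ν 1)) +
        (ν 0 ⬝ᵥ M.mulVec (ν 0)) * (ν 2 ⬝ᵥ M.mulVec (ν 2)) +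
        (ν 1 ⬝ᵥ M.mulVec (ν 1)) * (ν 2 ⬝ᵥ M.mulVec (ν 2)) := by
  have hH : M.IsHermitian := by
    rwa [Matrix.IsHermitian, conjTranspose_eq_transpose_of_trivial]
  set ν : Fin 3 → Fin 3 → ℝ := fun i => ⇑(hH.eigenvectorBasis i) with hνdef
  have hν : ∀ i j, ν i ⬝ᵥ ν j = if i = j then (1:ℝ) else 0 := by
    intro i j
    have := hH.eigenvectorBasis.orthonormal
    rw [orthonormal_iff_ite] at this
    have h := this i j
    simpa [EuclideanSpace.inner_eq_star_dotProduct, dotProduct_comm, hνdef, dotProduct, Fin.sum_univ_three, mul_comm] using h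
  have heig : ∀ i, ∃ μ : ℝ, M.mulVec (ν i) = μ • ν i := fun i =>
    ⟨hH.eigenvalues i, hH.mulVec_eigenvectorBasis i⟩
  refine ⟨⟨⟨ν, hν, (core_eq M hM ν hν heig)⟩, ?_⟩, ν, hν, heig, core_eq M hM ν hν heig⟩
  rintro x ⟨ν', hν', rfl⟩
  exact core M hM ν' hν'
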